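/- Let A11 ∈ ℝ^{n1×n1} and A22 ∈ ℝ^{n2×n2} be nilpotent with A11^{p1} = 0 and A22^{p2} = 0, let A12 ∈ ℝ^{n1×n2}, B1 ∈ ℝ^{n1×c₋}, B2 ∈ ℝ^{n2×c₋}, and set A = [[A11, A12], [0, A22]] and B = [[B1], [B2]] (so A21 = 0). Let X₋ ∈ ℝ^{c₋×c₋} be symmetric positive definite, ε > 0, H1 ∈ ℝ^{n1×n1}, H2 ∈ ℝ^{n2×n2}. Define X̃ = B X₋⁻¹ Bᵀ with blocks X̃11 ∈ ℝ^{n1×n1}, X̃12 ∈ ℝ^{n1×n2}, X̃22 ∈ ℝ^{n2×n2} partitioned conformably; T2 = Σ_{k=0}^{p2−1} A22^k (X̃22 + H2ᵀ H2 + ε I)(A22ᵀ)^k; X̂11 = A12 T2 A12ᵀ + X̃11 + (X̃12 + A12 T2 A22ᵀ)(T2 − A22 T2 A22ᵀ − X̃22)⁻¹ (X̃12 + A12 T2 A22ᵀ)ᵀ; and T1 = Σ_{k=0}^{p1−1} A11^k (X̂11 + H1ᵀ H1 + ε I)(A11ᵀ)^k. Then T1 and T2 are positive definite, and with P = blkdiag(T1⁻¹,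 T2⁻¹) the matrix F = [[P − Aᵀ P A, −Aᵀ P B], [−Bᵀ P A, X₋ − Bᵀ P B]] is positive definite. -/

import Mathlib

open Matrix Finset

namespace RoesserAux

variable {m n : Type*} [Fintype m] [Fintype n] [DecidableEq m] [DecidableEq n]

lemma posDef_of_isEmpty {k : Type*} [Fintype k] [IsEmpty k] (M : Matrix k k ℝ) : M.PosDef := by
  refine ⟨?_, fun x hx => absurd (Finsupp.ext fun i => isEmptyElim i) hx⟩
  ext i j
  exact isEmptyElim i

lemma isEmpty_of_one_eq_zero {k : ℕ} (h : (1 : Matrix (Fin k) (Fin k) ℝ) = 0) :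
    IsEmpty (Fin k) := by
  rw [← not_nonempty_iff]
  rintro ⟨i⟩
  have h2 := congrFun (congrFun h i) i
  simp [Matrix.one_apply] at h2

theorem posDef_fromBlocks₁₁ {A : Matrix m m ℝ} (B : Matrix m n ℝ) (D : Matrix n n ℝ)
    (hA : A.PosDef) :
    (fromBlocks A B Bᴴ D).PosDef ↔ (D - Bᴴ * A⁻¹ * B).PosDef := by
  haveI := hA.isUnit.invertible
  rw [posDef_iff_dotProduct_mulVec, posDef_iff_dotProduct_mulVec, Matrix.IsHermitian.fromBlocks₁₁ _ _ hA.1]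
  constructor
  · refine fun h => ⟨h.1, fun x hx => ?_⟩
    have hv : (-((A⁻¹ * B) *ᵥ x) ⊕ᵥ x) ≠ 0 := by
      intro hc
      exact hx (funext fun i => congrFun hc (Sum.inr i))
    have := h.2 hv
    rw [dotProduct_mulVec, schur_complement_eq₁₁ B D _ _ hA.1, neg_add_cancel, dotProduct_zero,
      zero_add] at this
    rw [dotProduct_mulVec]
    exact this
  · refine fun h => ⟨h.1, fun x hx => ?_⟩
    rw [dotProduct_mulVec, ← Sum.elim_comp_inl_inr x, schur_complement_eq₁₁ B D _ _ hA.1]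
    by_cases hxr : x ∘ Sum.inr = 0
    · have hxl : x ∘ Sum.inl ≠ 0 := by
        intro hc
        apply hx
        funext i
        cases i with
        | inl i => exact congrFun hc i
        | inr i => exact congrFun hxr i
      rw [hxr]
      simp only [mulVec_zero, add_zero, star_zero, zero_vecMul, zero_dotProduct]
      rw [← dotProduct_mulVec]
      exact hA.dotProduct_mulVec_pos hxl
    · refine add_pos_of_nonneg_of_pos ?_ ?_
      · rw [← dotProduct_mulVec]
        exact hA.posSemidef.dotProduct_mulVec_nonneg _
      · rw [← dotProduct_mulVec]
        exact h.2 hxr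

theorem posDef_fromBlocks₂₂ (A : Matrix m m ℝ) (B : Matrix m n ℝ) {D : Matrix n n ℝ}
    (hD : D.PosDef) :
    (fromBlocks A B Bᴴ D).PosDef ↔ (A - B * D⁻¹ * Bᴴ).PosDef := by
  haveI := hD.isUnit.invertible
  rw [posDef_iff_dotProduct_mulVec, posDef_iff_dotProduct_mulVec, Matrix.IsHermitian.fromBlocks₂₂ _ _ hD.1]
  constructor
  · refine fun h => ⟨h.1, fun x hx => ?_⟩
    have hv : (x ⊕ᵥ -((D⁻¹ * Bᴴ) *ᵥ x)) ≠ 0 := by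
      intro hc
      exact hx (funext fun i => congrFun hc (Sum.inl i))
    have := h.2 hv
    rw [dotProduct_mulVec, schur_complement_eq₂₂ A B _ _ hD.1, add_neg_cancel, star_zero,
      zero_vecMul, zero_dotProduct, zero_add] at this
    rw [dotProduct_mulVec]
    exact this
  · refine fun h => ⟨h.1, fun x hx => ?_⟩
    rw [dotProduct_mulVec, ← Sum.elim_comp_inl_inr x, schur_complement_eq₂₂ A B _ _ hD.1]
    by_cases hxl : x ∘ Sum.inl = 0
    · have hxr : x ∘ Sum.inr ≠ 0 := by
        intro hc
        apply hx
        funext i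
        cases i with
        | inl i => exact congrFun hxl i
        | inr i => exact congrFun hc i
      rw [hxl]
      simp only [mulVec_zero, zero_add, add_zero, star_zero, zero_vecMul, zero_dotProduct]
      rw [← dotProduct_mulVec]
      exact hD.dotProduct_mulVec_pos hxr
    · refine add_pos_of_nonneg_of_pos ?_ ?_
      · rw [← dotProduct_mulVec]
        exact hD.posSemidef.dotProduct_mulVec_nonneg _
      · rw [← dotProduct_mulVec]
        exact h.2 hxl


lemma psd_conj {a b : Type*} [Fintype a] [Fintype b] {M : Matrix a a ℝ} (hM : M.PosSemidef)
    (C : Matrix b a ℝ) : (C * M * Cᵀ).PosSemidef := by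
  have h := hM.mul_mul_conjTranspose_same C
  rwa [conjTranspose_eq_transpose_of_trivial] at h

lemma psd_transpose_mul_self {a b : Type*} [Fintype a] [Fintype b] (H : Matrix a b ℝ) :
    (Hᵀ * H).PosSemidef := by
  have h := posSemidef_conjTranspose_mul_self H
  rwa [conjTranspose_eq_transpose_of_trivial] at h

lemma smul_one_posDef {k : Type*} [Fintype k] [DecidableEq k] {ε : ℝ} (hε : 0 < ε) :
    (ε • (1 : Matrix k k ℝ)).PosDef := by
  refine posDef_iff_dotProduct_mulVec.mpr ⟨?_, fun x hx => ?_⟩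
  · unfold Matrix.IsHermitian
    rw [conjTranspose_smul, conjTranspose_one]
    simp
  · rw [smul_mulVec, one_mulVec, dotProduct_smul, smul_eq_mul]
    exact mul_pos hε (dotProduct_star_self_pos_iff.mpr hx)

lemma posSemidef_sum {k ι : Type*} [Fintype k] (s : Finset ι) (f : ι → Matrix k k ℝ)
    (h : ∀ i ∈ s, (f i).PosSemidef) : (∑ i ∈ s, f i).PosSemidef := by
  classical
  induction s using Finset.induction with
  | empty => simpa using (Matrix.PosSemidef.zero : (0 : Matrix k k ℝ).PosSemidef)
  | insert a s hnot ih =>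
      rw [Finset.sum_insert hnot]
      exact (h _ (Finset.mem_insert_self _ _)).add (ih fun i hi => h i (Finset.mem_insert_of_mem hi))

lemma lyap_term_psd {k : ℕ} (A M : Matrix (Fin k) (Fin k) ℝ) (hM : M.PosSemidef) (j : ℕ) :
    (A ^ j * M * Aᵀ ^ j).PosSemidef := by
  rw [show Aᵀ ^ j = (A ^ j)ᵀ from by rw [transpose_pow]]
  exact psd_conj hM (A ^ j)

lemma lyap_posDef {k : ℕ} {A M : Matrix (Fin k) (Fin k) ℝ} {p : ℕ}
    (hAp : A ^ p = 0) (hM : M.PosDef) :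
    (∑ i ∈ Finset.range p, A ^ i * M * Aᵀ ^ i).PosDef := by
  cases p with
  | zero =>
      haveI := isEmpty_of_one_eq_zero (by simpa using hAp)
      exact posDef_of_isEmpty _
  | succ q =>
      rw [Finset.sum_range_succ']
      simp only [pow_zero, one_mul, Matrix.mul_one]
      exact Matrix.PosDef.posSemidef_add
        (posSemidef_sum _ _ fun i _ => lyap_term_psd A M hM.posSemidef (i + 1)) hM

lemma lyap_eq {k : ℕ} {A M : Matrix (Fin k) (Fin k) ℝ} {p : ℕ} (hAp : A ^ p = 0) :
    (∑ i ∈ Finset.range p, A ^ i * M * Aᵀ ^ i)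
      - A * (∑ i ∈ Finset.range p, A ^ i * M * Aᵀ ^ i) * Aᵀ = M := by
  cases p with
  | zero =>
      haveI := isEmpty_of_one_eq_zero (by simpa using hAp)
      exact Subsingleton.elim _ _
  | succ q =>
      have hmul : A * (∑ i ∈ Finset.range (q + 1), A ^ i * M * Aᵀ ^ i) * Aᵀ
          = ∑ i ∈ Finset.range (q + 1), A ^ (i + 1) * M * Aᵀ ^ (i + 1) := by
        rw [Finset.mul_sum, Finset.sum_mul]
        refine Finset.sum_congr rfl fun i _ => ?_
        rw [pow_succ' A i, pow_succ Aᵀ i]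
        simp only [Matrix.mul_assoc]
      have h1 := Finset.sum_range_succ' (fun i => A ^ i * M * Aᵀ ^ i) (q + 1)
      have h2 := Finset.sum_range_succ (fun i => A ^ i * M * Aᵀ ^ i) (q + 1)
      simp only [hAp, Matrix.zero_mul, add_zero, pow_zero, Matrix.one_mul,
        Matrix.mul_one] at h1 h2
      rw [h2] at h1
      rw [hmul, eq_sub_of_add_eq h1.symm, sub_sub_cancel]

lemma fromBlocks_sub {l m n o : Type*} (A : Matrix n l ℝ) (B : Matrix n m ℝ)
    (C : Matrix o l ℝ) (D : Matrix o m ℝ) (A' : Matrix n l ℝ) (B' : Matrix n m ℝ)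
    (C' : Matrix o l ℝ) (D' : Matrix o m ℝ) :
    fromBlocks A B C D - fromBlocks A' B' C' D'
      = fromBlocks (A - A') (B - B') (C - C') (D - D') := by
  rw [sub_eq_add_neg, fromBlocks_neg, fromBlocks_add]
  simp [sub_eq_add_neg]

lemma posDef_fromBlocks_diag {a b : Type*} [Fintype a] [Fintype b] [DecidableEq a] [DecidableEq b]
    {M : Matrix a a ℝ} {N : Matrix b b ℝ} (hM : M.PosDef) (hN : N.PosDef) :
    (fromBlocks M 0 0 N).PosDef := by
  have h := (posDef_fromBlocks₂₂ M (0 : Matrix a b ℝ) hN).mpr (by simpa using hM)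
  simpa using h

end RoesserAux


open RoesserAux

/-- 2-D (Roesser) Gramian-type parameterization. With `A21 = 0`
and nilpotent `A11`, `A22`, the matrices `T2` and `T1` built from the
Lyapunov-type sums are positive definite and, with
`P = blkdiag(T1⁻¹, T2⁻¹)`, the block matrix
`F = [[P − Aᵀ P A, −Aᵀ P B], [−Bᵀ P A, X₋ − Bᵀ P B]]` is positive definite. -/
theorem roesser_gramian_parameterization_renders_F_posdef
    (n1 n2 cm p1 p2 : ℕ)
    (A11 : Matrix (Fin n1) (Fin n1) ℝ) (hA11 : A11 ^ p1 = 0)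
    (A22 : Matrix (Fin n2) (Fin n2) ℝ) (hA22 : A22 ^ p2 = 0)
    (A12 : Matrix (Fin n1) (Fin n2) ℝ)
    (B1 : Matrix (Fin n1) (Fin cm) ℝ) (B2 : Matrix (Fin n2) (Fin cm) ℝ)
    (A : Matrix (Fin n1 ⊕ Fin n2) (Fin n1 ⊕ Fin n2) ℝ)
    (hA : A = Matrix.fromBlocks A11 A12 0 A22)
    (B : Matrix (Fin n1 ⊕ Fin n2) (Fin cm) ℝ) (hB : B = Matrix.fromRows B1 B2)
    (Xm : Matrix (Fin cm) (Fin cm) ℝ) (hXm : Xm.PosDef)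
    (ε : ℝ) (hε : 0 < ε)
    (H1 : Matrix (Fin n1) (Fin n1) ℝ) (H2 : Matrix (Fin n2) (Fin n2) ℝ)
    (Xt : Matrix (Fin n1 ⊕ Fin n2) (Fin n1 ⊕ Fin n2) ℝ) (hXt : Xt = B * Xm⁻¹ * Bᵀ)
    (Xt11 : Matrix (Fin n1) (Fin n1) ℝ) (hXt11 : Xt11 = Xt.toBlocks₁₁)
    (Xt12 : Matrix (Fin n1) (Fin n2) ℝ) (hXt12 : Xt12 = Xt.toBlocks₁₂)
    (Xt22 : Matrix (Fin n2) (Fin n2) ℝ) (hXt22 : Xt22 = Xt.toBlocks₂₂)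
    (T2 : Matrix (Fin n2) (Fin n2) ℝ)
    (hT2 : T2 = ∑ k ∈ Finset.range p2,
      A22 ^ k * (Xt22 + H2ᵀ * H2 + ε • (1 : Matrix (Fin n2) (Fin n2) ℝ)) * A22ᵀ ^ k)
    (Xh11 : Matrix (Fin n1) (Fin n1) ℝ)
    (hXh11 : Xh11 = A12 * T2 * A12ᵀ + Xt11 +
      (Xt12 + A12 * T2 * A22ᵀ) * (T2 - A22 * T2 * A22ᵀ - Xt22)⁻¹ *
        (Xt12 + A12 * T2 * A22ᵀ)ᵀ)
    (T1 : Matrix (Fin n1) (Fin n1) ℝ)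
    (hT1 : T1 = ∑ k ∈ Finset.range p1,
      A11 ^ k * (Xh11 + H1ᵀ * H1 + ε • (1 : Matrix (Fin n1) (Fin n1) ℝ)) * A11ᵀ ^ k)
    (P : Matrix (Fin n1 ⊕ Fin n2) (Fin n1 ⊕ Fin n2) ℝ)
    (hP : P = Matrix.fromBlocks T1⁻¹ 0 0 T2⁻¹) :
    T1.PosDef ∧ T2.PosDef ∧
    (Matrix.fromBlocks (P - Aᵀ * P * A) (-(Aᵀ * P * B))
      (-(Bᵀ * P * A)) (Xm - Bᵀ * P * B)).PosDef := by
  have hXmInv : Xm⁻¹.PosDef := hXm.inv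
  have hXmInvT : (Xm⁻¹)ᵀ = Xm⁻¹ := by
    rw [Matrix.transpose_nonsing_inv]
    rw [show Xmᵀ = Xm from by
      have h := hXm.1.eq; rwa [conjTranspose_eq_transpose_of_trivial] at h]
  -- blocks of Xt
  have hXtB : Xt = fromBlocks (B1 * Xm⁻¹ * B1ᵀ) (B1 * Xm⁻¹ * B2ᵀ)
      (B2 * Xm⁻¹ * B1ᵀ) (B2 * Xm⁻¹ * B2ᵀ) := by
    rw [hXt, hB, transpose_fromRows, fromRows_mul, fromRows_mul_fromCols]
  have hXt11e : Xt11 = B1 * Xm⁻¹ * B1ᵀ := by rw [hXt11, hXtB]; rfl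
  have hXt12e : Xt12 = B1 * Xm⁻¹ * B2ᵀ := by rw [hXt12, hXtB]; rfl
  have hXt22e : Xt22 = B2 * Xm⁻¹ * B2ᵀ := by rw [hXt22, hXtB]; rfl
  have hXtblocks : Xt = fromBlocks Xt11 Xt12 Xt12ᵀ Xt22 := by
    rw [hXtB, hXt11e, hXt12e, hXt22e, fromBlocks_inj]
    refine ⟨rfl, rfl, ?_, rfl⟩
    rw [Matrix.transpose_mul, Matrix.transpose_mul, transpose_transpose, hXmInvT,
      Matrix.mul_assoc]
  have hXt11psd : Xt11.PosSemidef := hXt11e ▸ psd_conj hXmInv.posSemidef B1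
  have hXt22psd : Xt22.PosSemidef := hXt22e ▸ psd_conj hXmInv.posSemidef B2
  have hεI2 : (ε • (1 : Matrix (Fin n2) (Fin n2) ℝ)).PosDef := smul_one_posDef hε
  have hεI1 : (ε • (1 : Matrix (Fin n1) (Fin n1) ℝ)).PosDef := smul_one_posDef hε
  have hM2 : (Xt22 + H2ᵀ * H2 + ε • (1 : Matrix (Fin n2) (Fin n2) ℝ)).PosDef :=
    Matrix.PosDef.posSemidef_add (hXt22psd.add (psd_transpose_mul_self H2)) hεI2
  have hT2pd : T2.PosDef := by rw [hT2]; exact lyap_posDef hA22 hM2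
  have hT2T : T2ᵀ = T2 := by
    have h := hT2pd.1.eq; rwa [conjTranspose_eq_transpose_of_trivial] at h
  -- the Schur complement S
  set S : Matrix (Fin n2) (Fin n2) ℝ := T2 - A22 * T2 * A22ᵀ - Xt22 with hSdef
  have hT2lyap : T2 - A22 * T2 * A22ᵀ
      = Xt22 + H2ᵀ * H2 + ε • (1 : Matrix (Fin n2) (Fin n2) ℝ) := by
    rw [hT2]; exact lyap_eq hA22
  have hSeq : S = H2ᵀ * H2 + ε • (1 : Matrix (Fin n2) (Fin n2) ℝ) := by
    rw [hSdef, hT2lyap]; abel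
  have hSpd : S.PosDef := by
    rw [hSeq]; exact Matrix.PosDef.posSemidef_add (psd_transpose_mul_self H2) hεI2
  set R : Matrix (Fin n1) (Fin n2) ℝ := Xt12 + A12 * T2 * A22ᵀ with hRdef
  set K : Matrix (Fin n1) (Fin n1) ℝ :=
    H1ᵀ * H1 + ε • (1 : Matrix (Fin n1) (Fin n1) ℝ) with hKdef
  have hKpd : K.PosDef :=
    Matrix.PosDef.posSemidef_add (psd_transpose_mul_self H1) hεI1
  have hXh11psd : Xh11.PosSemidef := by
    rw [hXh11]
    exact ((psd_conj hT2pd.posSemidef A12).add hXt11psd).add (psd_conj hSpd.inv.posSemidef R)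
  have hM1 : (Xh11 + H1ᵀ * H1 + ε • (1 : Matrix (Fin n1) (Fin n1) ℝ)).PosDef :=
    Matrix.PosDef.posSemidef_add (hXh11psd.add (psd_transpose_mul_self H1)) hεI1
  have hT1pd : T1.PosDef := by rw [hT1]; exact lyap_posDef hA11 hM1
  have hT1lyap : T1 - A11 * T1 * A11ᵀ
      = Xh11 + H1ᵀ * H1 + ε • (1 : Matrix (Fin n1) (Fin n1) ℝ) := by
    rw [hT1]; exact lyap_eq hA11
  refine ⟨hT1pd, hT2pd, ?_⟩
  -- set up Q, C, D0
  set Q : Matrix (Fin n1 ⊕ Fin n2) (Fin n1 ⊕ Fin n2) ℝ := fromBlocks T1 0 0 T2 with hQdef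
  have hQpd : Q.PosDef := posDef_fromBlocks_diag hT1pd hT2pd
  have hQP : Q * P = 1 := by
    rw [hP, hQdef, fromBlocks_multiply]
    simp [Matrix.mul_nonsing_inv _ hT1pd.det_pos.ne'.isUnit,
      Matrix.mul_nonsing_inv _ hT2pd.det_pos.ne'.isUnit]
  have hQinv : Q⁻¹ = P := inv_eq_right_inv hQP
  have hPinv : P⁻¹ = Q := inv_eq_left_inv hQP
  have hPpd : P.PosDef := hQinv ▸ hQpd.inv
  set D0 : Matrix ((Fin n1 ⊕ Fin n2) ⊕ Fin cm) ((Fin n1 ⊕ Fin n2) ⊕ Fin cm) ℝ :=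
    fromBlocks P 0 0 Xm with hD0def
  have hD0pd : D0.PosDef := posDef_fromBlocks_diag hPpd hXm
  have hD0inv : D0⁻¹ = fromBlocks P⁻¹ 0 0 Xm⁻¹ := by
    refine inv_eq_right_inv ?_
    rw [hD0def, fromBlocks_multiply]
    simp [Matrix.mul_nonsing_inv _ hPpd.det_pos.ne'.isUnit,
      Matrix.mul_nonsing_inv _ hXm.det_pos.ne'.isUnit]
  set C : Matrix (Fin n1 ⊕ Fin n2) ((Fin n1 ⊕ Fin n2) ⊕ Fin cm) ℝ :=
    fromCols A B with hCdef
  have hCH : Cᴴ = fromRows Aᵀ Bᵀ := by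
    rw [hCdef, conjTranspose_eq_transpose_of_trivial, transpose_fromCols]
  -- C * D0⁻¹ * Cᴴ = A*Q*Aᵀ + Xt
  have hCDC : C * D0⁻¹ * Cᴴ = A * Q * Aᵀ + Xt := by
    rw [hCH, hD0inv, hCdef, fromCols_mul_fromBlocks]
    simp only [Matrix.mul_zero, add_zero, zero_add]
    rw [fromCols_mul_fromRows, hPinv, hXt]
  -- block form of A*Q*Aᵀ
  have hAQAT : A * Q * Aᵀ = fromBlocks (A11 * T1 * A11ᵀ + A12 * T2 * A12ᵀ)
      (A12 * T2 * A22ᵀ) (A22 * T2 * A12ᵀ) (A22 * T2 * A22ᵀ) := by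
    rw [hA, hQdef, fromBlocks_transpose, fromBlocks_multiply, fromBlocks_multiply]
    congr 1 <;> simp [Matrix.mul_assoc]
  -- the core positive definite matrix
  have hcorepd : (Q - C * D0⁻¹ * Cᴴ).PosDef := by
    rw [hCDC]
    have hblocks : Q - (A * Q * Aᵀ + Xt)
        = fromBlocks (R * S⁻¹ * Rᵀ + K) (-R) (-R)ᴴ S := by
      rw [hAQAT, hXtblocks, hQdef, fromBlocks_add, fromBlocks_sub,
        conjTranspose_eq_transpose_of_trivial, transpose_neg, fromBlocks_inj]
      refine ⟨?_, ?_, ?_, ?_⟩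
      · have h1 : T1 - (A11 * T1 * A11ᵀ + A12 * T2 * A12ᵀ + Xt11)
            = (T1 - A11 * T1 * A11ᵀ) - A12 * T2 * A12ᵀ - Xt11 := by abel
        rw [h1, hT1lyap, hXh11, hKdef]
        abel
      · rw [hRdef]; abel
      · simp only [hRdef, transpose_add, Matrix.transpose_mul, transpose_transpose, hT2T,
          Matrix.mul_assoc]
        abel
      · rw [hSdef]; abel
    rw [hblocks]
    refine (posDef_fromBlocks₂₂ _ (-R) hSpd).mpr ?_
    have : -R * S⁻¹ * (-R)ᴴ = R * S⁻¹ * Rᵀ := by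
      rw [conjTranspose_eq_transpose_of_trivial, transpose_neg]
      simp [Matrix.neg_mul, Matrix.mul_neg]
    rw [this, add_sub_cancel_left]
    exact hKpd
  have hGpd : (fromBlocks Q C Cᴴ D0).PosDef :=
    (posDef_fromBlocks₂₂ Q C hD0pd).mpr hcorepd
  have hF : (D0 - Cᴴ * Q⁻¹ * C).PosDef := (posDef_fromBlocks₁₁ C D0 hQpd).mp hGpd
  have hfinal : D0 - Cᴴ * Q⁻¹ * C
      = fromBlocks (P - Aᵀ * P * A) (-(Aᵀ * P * B)) (-(Bᵀ * P * A)) (Xm - Bᵀ * P * B) := by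
    rw [hQinv, hCH, hCdef, fromRows_mul, fromRows_mul_fromCols, hD0def, fromBlocks_sub]
    congr 1 <;> simp
  rw [← hfinal]
  exact hF
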